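/- Convexification at δ = 0 under SOSC (Corollary 3.6): Assume SOSC. Then the convexification recursion with parameter δ = 0 satisfies R̃_k(0) ≻ 0 for all k = 0,…,N−1, and the block matrices H̃_k(0) = [[Q̃_k(0), S̃_k(0)ᵀ],[S̃_k(0), R̃_k(0)]] are positive semidefinite for all k = 0,…,N−1 (and H̃_N(0) = 0 is positive semidefinite). -/

import Mathlib

open Matrix BigOperators Finset

/-- SOSC: the homogeneous quadratic objective is positive on every nonzero
feasible homogeneous trajectory. -/
def SOSC {nx nu : ℕ} (N : ℕ)
    (A : ℕ → Matrix (Fin nx) (Fin nx) ℝ) (B : ℕ → Matrix (Fin nx) (Fin nu) ℝ)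
    (Q : ℕ → Matrix (Fin nx) (Fin nx) ℝ) (R : ℕ → Matrix (Fin nu) (Fin nu) ℝ)
    (S : ℕ → Matrix (Fin nu) (Fin nx) ℝ) : Prop :=
  ∀ (p : ℕ → Fin nx → ℝ) (q : ℕ → Fin nu → ℝ),
    p 0 = 0 → (∀ k < N, p (k + 1) = A k *ᵥ p k + B k *ᵥ q k) →
    ¬ ((∀ k ≤ N, p k = 0) ∧ (∀ k < N, q k = 0)) →
    0 < (∑ k ∈ range N,
        (p k ⬝ᵥ Q k *ᵥ p k + 2 * (q k ⬝ᵥ S k *ᵥ p k) + q k ⬝ᵥ R k *ᵥ q k))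
      + p N ⬝ᵥ Q N *ᵥ p N


section AuxConvexify
variable {m n o : Type*} [Fintype m] [Fintype n] [Fintype o]

lemma convexify_dp_symm (M : Matrix m n ℝ) (u : m → ℝ) (w : n → ℝ) :
    u ⬝ᵥ M *ᵥ w = w ⬝ᵥ Mᵀ *ᵥ u := by
  rw [dotProduct_mulVec, ← mulVec_transpose, dotProduct_comm]

lemma convexify_dp_left (K : Matrix m n ℝ) (M : Matrix m o ℝ) (x : n → ℝ) (y : o → ℝ) :
    (K *ᵥ x) ⬝ᵥ M *ᵥ y = x ⬝ᵥ (Kᵀ * M) *ᵥ y := by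
  rw [dotProduct_mulVec, vecMul_mulVec, ← dotProduct_mulVec]

lemma convexify_quad_term (Am : Matrix n m ℝ) (M : Matrix n n ℝ) (Bm : Matrix n o ℝ)
    (x : m → ℝ) (u : o → ℝ) :
    (Am *ᵥ x) ⬝ᵥ M *ᵥ (Bm *ᵥ u) = x ⬝ᵥ (Amᵀ * M * Bm) *ᵥ u := by
  rw [mulVec_mulVec, dotProduct_mulVec, vecMul_mulVec, ← dotProduct_mulVec,
    ← mulVec_mulVec, mulVec_mulVec, Matrix.mul_assoc]

lemma convexify_quad_expand (P : Matrix n n ℝ) (hP : P.IsSymm)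
    (Am : Matrix n m ℝ) (Bm : Matrix n o ℝ) (x : m → ℝ) (u : o → ℝ) :
    (Am *ᵥ x + Bm *ᵥ u) ⬝ᵥ P *ᵥ (Am *ᵥ x + Bm *ᵥ u)
      = x ⬝ᵥ (Amᵀ * P * Am) *ᵥ x + 2 * (u ⬝ᵥ (Bmᵀ * P * Am) *ᵥ x)
        + u ⬝ᵥ (Bmᵀ * P * Bm) *ᵥ u := by
  rw [mulVec_add, dotProduct_add, add_dotProduct, add_dotProduct]
  rw [convexify_quad_term, convexify_quad_term, convexify_quad_term, convexify_quad_term]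
  have hcross : x ⬝ᵥ (Amᵀ * P * Bm) *ᵥ u = u ⬝ᵥ (Bmᵀ * P * Am) *ᵥ x := by
    rw [convexify_dp_symm]
    congr 1
    rw [Matrix.transpose_mul, Matrix.transpose_mul, transpose_transpose, hP.eq, Matrix.mul_assoc]
  rw [hcross]; ring

lemma convexify_telescope (f : ℕ → ℝ) (a b : ℕ) (hab : a ≤ b) :
    ∑ j ∈ Ico a b, (f j - f (j + 1)) = f a - f b := by
  rw [Finset.sum_Ico_eq_sum_range]
  have h : ∑ i ∈ range (b - a), (f (a + i) - f (a + i + 1))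
      = f (a + 0) - f (a + (b - a)) := Finset.sum_range_sub' (fun i => f (a + i)) (b - a)
  exact h.trans (by rw [Nat.add_zero, Nat.add_sub_cancel' hab])

end AuxConvexify

/-- **Convexification at `δ = 0` under SOSC (Corollary 3.6).**  The recursion with
parameter `0` produces `R̃_k(0) ≻ 0` and positive semidefinite blocks
`H̃_k(0) = [[Q̃_k(0), S̃_k(0)ᵀ],[S̃_k(0), R̃_k(0)]]` for `k < N`, while
`H̃_N(0) = 0` is positive semidefinite. -/
theorem convexification_delta_zero_posdef
    (N nx nu : ℕ) (hN : 1 ≤ N) (hnx : 1 ≤ nx) (hnu : 1 ≤ nu)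
    (A : ℕ → Matrix (Fin nx) (Fin nx) ℝ) (B : ℕ → Matrix (Fin nx) (Fin nu) ℝ)
    (Q : ℕ → Matrix (Fin nx) (Fin nx) ℝ) (R : ℕ → Matrix (Fin nu) (Fin nu) ℝ)
    (S : ℕ → Matrix (Fin nu) (Fin nx) ℝ)
    (hQsymm : ∀ k ≤ N, (Q k).IsSymm) (hRsymm : ∀ k < N, (R k).IsSymm)
    (hsosc : SOSC N A B Q R S)
    (Qbar : ℕ → Matrix (Fin nx) (Fin nx) ℝ) (Rt : ℕ → Matrix (Fin nu) (Fin nu) ℝ)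
    (St : ℕ → Matrix (Fin nu) (Fin nx) ℝ) (Qt : ℕ → Matrix (Fin nx) (Fin nx) ℝ)
    (hQbarN : Qbar N = Q N - (0 : ℝ) • (1 : Matrix (Fin nx) (Fin nx) ℝ))
    (hRt : ∀ k < N, Rt k = R k + (B k)ᵀ * Qbar (k + 1) * B k)
    (hSt : ∀ k < N, St k = S k + (B k)ᵀ * Qbar (k + 1) * A k)
    (hQt : ∀ k < N, Qt k = (St k)ᵀ * (Rt k)⁻¹ * St k
      + (0 : ℝ) • (1 : Matrix (Fin nx) (Fin nx) ℝ))
    (hQbar : ∀ k < N, Qbar k = Q k + (A k)ᵀ * Qbar (k + 1) * A k - Qt k) :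
    (∀ k < N, (Rt k).PosDef) ∧
    (∀ k < N, (Matrix.fromBlocks (Qt k) (St k)ᵀ (St k) (Rt k)).PosSemidef) ∧
    (0 : Matrix (Fin nx ⊕ Fin nu) (Fin nx ⊕ Fin nu) ℝ).PosSemidef := by
  have hQbarNeq : Qbar N = Q N := by rw [hQbarN]; simp
  have hQteq : ∀ k < N, Qt k = (St k)ᵀ * (Rt k)⁻¹ * St k := by
    intro k hk; rw [hQt k hk]; simp
  -- symmetry of Qbar, downward induction
  have hQbarSymmAux : ∀ d j, j + d = N → (Qbar j).IsSymm := by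
    intro d
    induction d with
    | zero =>
      intro j hj
      have hjN : j = N := by omega
      rw [hjN, hQbarNeq]; exact hQsymm N le_rfl
    | succ d ih =>
      intro j hj
      have hjN : j < N := by omega
      have hQ' : (Qbar (j + 1)).IsSymm := ih (j + 1) (by omega)
      have hRts : (Rt j).IsSymm := by
        rw [hRt j hjN]
        simp [Matrix.IsSymm, transpose_add, Matrix.transpose_mul, transpose_transpose,
          hQ'.eq, (hRsymm j hjN).eq, Matrix.mul_assoc]
      rw [hQbar j hjN, hQteq j hjN]
      simp [Matrix.IsSymm, transpose_add, transpose_sub, Matrix.transpose_mul,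
        transpose_transpose, Matrix.transpose_nonsing_inv, hRts.eq, hQ'.eq,
        (hQsymm j hjN.le).eq, Matrix.mul_assoc]
  have hQbarSymm : ∀ j ≤ N, (Qbar j).IsSymm := fun j hj =>
    hQbarSymmAux (N - j) j (by omega)
  have hRtSymm : ∀ j < N, (Rt j).IsSymm := by
    intro j hjN
    rw [hRt j hjN]
    simp [Matrix.IsSymm, transpose_add, Matrix.transpose_mul, transpose_transpose,
      (hQbarSymm (j + 1) (by omega)).eq, (hRsymm j hjN).eq, Matrix.mul_assoc]
  -- main positive definiteness, by strong downward induction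
  have key : ∀ d k, k + d + 1 = N → (Rt k).PosDef := by
    intro d
    induction d using Nat.strong_induction_on with
    | _ d ih =>
      intro k hk
      have hkN : k < N := by omega
      have hpos_gt : ∀ j, k < j → j < N → (Rt j).PosDef := fun j h1 h2 =>
        ih (N - j - 1) (by omega) j (by omega)
      refine Matrix.PosDef.of_dotProduct_mulVec_pos ?_ ?_
      · show (Rt k)ᴴ = Rt k
        rw [Matrix.conjTranspose_eq_transpose_of_trivial]
        exact hRtSymm k hkN
      · intro v hv
        have hstarv : star v = v := by ext i; simp
        rw [hstarv]
        -- construct the trajectory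
        set qf : ℕ → (Fin nx → ℝ) → (Fin nu → ℝ) := fun j xj =>
          if j < k then 0 else if j = k then v else -(((Rt j)⁻¹ * St j) *ᵥ xj) with hqf
        set p : ℕ → Fin nx → ℝ := fun j =>
          Nat.rec (motive := fun _ => Fin nx → ℝ) 0
            (fun i pi => A i *ᵥ pi + B i *ᵥ qf i pi) j with hpdef
        set q : ℕ → Fin nu → ℝ := fun j => qf j (p j) with hqdef
        have hp0 : p 0 = 0 := rfl
        have hpsucc : ∀ j, p (j + 1) = A j *ᵥ p j + B j *ᵥ q j := fun j => rfl
        have hql : ∀ j, j < k → q j = 0 := by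
          intro j hj; simp [hqdef, hqf, hj]
        have hqk : q k = v := by simp [hqdef, hqf]
        have hqg : ∀ j, k < j → q j = -(((Rt j)⁻¹ * St j) *ᵥ p j) := by
          intro j hj
          have h1 : ¬ j < k := by omega
          have h2 : j ≠ k := by omega
          simp [hqdef, hqf, h1, h2]
        have hpz : ∀ j, j ≤ k → p j = 0 := by
          intro j
          induction j with
          | zero => intro _; exact hp0
          | succ i ihp =>
            intro h
            rw [hpsucc, ihp (by omega), hql i (by omega)]
            simp
        have hnt : ¬ ((∀ j ≤ N, p j = 0) ∧ (∀ j < N, q j = 0)) := by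
          rintro ⟨hpa, hqa⟩
          exact hv (hqk ▸ hqa k hkN)
        have hobj := hsosc p q hp0 (fun j _ => hpsucc j) hnt
        -- abbreviations
        set stage : ℕ → ℝ := fun j =>
          p j ⬝ᵥ Q j *ᵥ p j + 2 * (q j ⬝ᵥ S j *ᵥ p j) + q j ⬝ᵥ R j *ᵥ q j with hstagedef
        set f : ℕ → ℝ := fun j => p j ⬝ᵥ Qbar j *ᵥ p j with hfdef
        have hstage0 : ∀ j < k, stage j = 0 := by
          intro j hj
          simp [hstagedef, hpz j hj.le, hql j hj]
        have hatk : stage k + f (k + 1) = v ⬝ᵥ Rt k *ᵥ v := by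
          have hpk : p k = 0 := hpz k le_rfl
          have hpk1 : p (k + 1) = B k *ᵥ v := by rw [hpsucc, hpk, hqk]; simp
          have h1 : stage k = v ⬝ᵥ R k *ᵥ v := by simp [hstagedef, hpk, hqk]
          have h2 : f (k + 1) = v ⬝ᵥ ((B k)ᵀ * Qbar (k + 1) * B k) *ᵥ v := by
            rw [hfdef]; simp only [hpk1]
            exact convexify_quad_term (B k) (Qbar (k + 1)) (B k) v v
          rw [h1, h2, hRt k hkN, Matrix.add_mulVec, dotProduct_add]
        have hstep : ∀ j, k < j → j < N → stage j + f (j + 1) = f j := by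
          intro j hjk hjN
          have hQ' : (Qbar (j + 1)).IsSymm := hQbarSymm (j + 1) (by omega)
          have hRtj : (Rt j).PosDef := hpos_gt j hjk hjN
          have hRtjunit : IsUnit (Rt j).det := by
            exact (Matrix.isUnit_iff_isUnit_det _).mp hRtj.isUnit
          set K : Matrix (Fin nu) (Fin nx) ℝ := (Rt j)⁻¹ * St j with hKdef
          have hKRt : Kᵀ * Rt j = (St j)ᵀ := by
            rw [hKdef, Matrix.transpose_mul, Matrix.transpose_nonsing_inv,
              (hRtSymm j hjN).eq, Matrix.mul_assoc, Matrix.nonsing_inv_mul _ hRtjunit,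
              Matrix.mul_one]
          have hKtSt : Kᵀ * St j = (St j)ᵀ * (Rt j)⁻¹ * St j := by
            rw [hKdef, Matrix.transpose_mul, Matrix.transpose_nonsing_inv,
              (hRtSymm j hjN).eq, Matrix.mul_assoc]
          have hqj : q j = -(K *ᵥ p j) := hqg j hjk
          set x : Fin nx → ℝ := p j with hxdef
          -- expand f (j+1)
          have hexp : f (j + 1)
              = x ⬝ᵥ ((A j)ᵀ * Qbar (j + 1) * A j) *ᵥ x
                + 2 * (q j ⬝ᵥ ((B j)ᵀ * Qbar (j + 1) * A j) *ᵥ x)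
                + q j ⬝ᵥ ((B j)ᵀ * Qbar (j + 1) * B j) *ᵥ q j := by
            rw [hfdef]; simp only [hpsucc j]
            exact convexify_quad_expand (Qbar (j + 1)) hQ' (A j) (B j) x (q j)
          -- combine with stage j
          have hcomb : stage j + f (j + 1)
              = x ⬝ᵥ (Q j + (A j)ᵀ * Qbar (j + 1) * A j) *ᵥ x
                + 2 * (q j ⬝ᵥ St j *ᵥ x) + q j ⬝ᵥ Rt j *ᵥ q j := by
            rw [hstagedef, hexp, hSt j hjN, hRt j hjN]
            simp only [Matrix.add_mulVec, dotProduct_add]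
            ring
          rw [hcomb, hqj]
          have e1 : (-(K *ᵥ x)) ⬝ᵥ St j *ᵥ x = -(x ⬝ᵥ ((St j)ᵀ * (Rt j)⁻¹ * St j) *ᵥ x) := by
            rw [neg_dotProduct, convexify_dp_left, hKtSt]
          have e2 : (-(K *ᵥ x)) ⬝ᵥ Rt j *ᵥ (-(K *ᵥ x))
              = x ⬝ᵥ ((St j)ᵀ * (Rt j)⁻¹ * St j) *ᵥ x := by
            rw [Matrix.mulVec_neg, dotProduct_neg, neg_dotProduct, neg_neg,
              Matrix.mulVec_mulVec, convexify_dp_left, ← Matrix.mul_assoc, hKRt,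
              Matrix.mul_assoc, ← Matrix.mul_assoc, ← hKtSt, hKdef]
          rw [e1, e2]
          simp only [hfdef]
          have hQbarj : Qbar j = (Q j + (A j)ᵀ * Qbar (j + 1) * A j)
              - (St j)ᵀ * (Rt j)⁻¹ * St j := by
            rw [hQbar j hjN, hQteq j hjN]
          rw [hQbarj, Matrix.sub_mulVec, dotProduct_sub]
          ring
        -- telescoping sum
        have hIco : ∑ j ∈ Ico (k + 1) N, stage j = f (k + 1) - f N := by
          have hcong : ∀ j ∈ Ico (k + 1) N, stage j = f j - f (j + 1) := by
            intro j hj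
            obtain ⟨h1, h2⟩ := Finset.mem_Ico.mp hj
            have := hstep j (by omega) h2
            linarith
          rw [Finset.sum_congr rfl hcong]
          exact convexify_telescope f (k + 1) N (by omega)
        have hsum : ∑ j ∈ range N, stage j = v ⬝ᵥ Rt k *ᵥ v - f N := by
          rw [← Finset.sum_range_add_sum_Ico _ hkN.le]
          rw [Finset.sum_eq_sum_Ico_succ_bot hkN, hIco]
          rw [Finset.sum_eq_zero (fun j hj => hstage0 j (Finset.mem_range.mp hj))]
          linarith [hatk]
        have hfN : f N = p N ⬝ᵥ Q N *ᵥ p N := by simp only [hfdef, hQbarNeq]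
        have : (0 : ℝ) < v ⬝ᵥ Rt k *ᵥ v := by
          have hs : ∑ j ∈ range N,
              (p j ⬝ᵥ Q j *ᵥ p j + 2 * (q j ⬝ᵥ S j *ᵥ p j) + q j ⬝ᵥ R j *ᵥ q j)
              = ∑ j ∈ range N, stage j := rfl
          rw [hs, hsum, hfN] at hobj
          linarith
        exact this
  have hRtPos : ∀ k < N, (Rt k).PosDef := fun k hk => key (N - k - 1) k (by omega)
  refine ⟨hRtPos, ?_, Matrix.PosSemidef.zero⟩
  intro k hkN
  have hpd := hRtPos k hkN
  haveI := hpd.isUnit.invertible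
  have hB : ((St k)ᵀ)ᴴ = St k := by
    rw [Matrix.conjTranspose_eq_transpose_of_trivial, transpose_transpose]
  have hblk : Matrix.fromBlocks (Qt k) (St k)ᵀ (St k) (Rt k)
      = Matrix.fromBlocks (Qt k) ((St k)ᵀ) (((St k)ᵀ)ᴴ) (Rt k) := by rw [hB]
  rw [hblk, Matrix.PosDef.fromBlocks₂₂ _ _ hpd, hB, hQteq k hkN]
  simpa using (Matrix.PosSemidef.zero (n := Fin nx) (R := ℝ))
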